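/- arXiv:2510.11433 — 2 statements merged into one kernel-verified Lean document; each statement's English description precedes it below -/
import Mathlib

section
/- Suppose (𝒳, S, γ, (Λ_a)_{a∈A}) is a spectral decomposition system for a Euclidean space 𝔥 with {Λ_a : a ∈ A} closed in L(𝒳,𝔥). Let D be a nonempty S-invariant subset of 𝒳 and let X ∈ 𝔥. Then N_F(X; γ⁻¹(D)) = {Λ_a y : y ∈ N_F(γ(X); D), a ∈ A_X}. -/
open Filter Topology Set Metric
open scoped RealInnerProductSpace

noncomputable section

/-- A spectral decomposition system `(𝒳, S, γ, (Λ_a)_{a ∈ A})` for the space `H`: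
`S` acts on `𝒳` by linear isometries (via `act`), `γ : H → 𝒳` is the spectral
mapping, each `Λ a : 𝒳 → H` is a linear isometry, and the axioms [A], [B], [C] hold,
with `τ` the `S`-invariant ordering mapping of axiom [A]. -/
structure SDS (𝒳 H : Type*) [NormedAddCommGroup 𝒳] [InnerProductSpace ℝ 𝒳]
    [NormedAddCommGroup H] [InnerProductSpace ℝ H]
    (S : Type*) [Group S] (A : Type*) where
  act : S →* (𝒳 ≃ₗᵢ[ℝ] 𝒳)
  γ : H → 𝒳
  Λ : A → 𝒳 →ₗᵢ[ℝ] H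
  τ : 𝒳 → 𝒳
  τ_inv : ∀ (s : S) (x : 𝒳), τ (act s x) = τ x
  τ_orbit : ∀ x : 𝒳, ∃ s : S, τ x = act s x
  γΛ : ∀ (a : A) (x : 𝒳), γ (Λ a x) = τ x
  decomp : ∀ X : H, ∃ a : A, X = Λ a (γ X)
  inner_le : ∀ X Y : H, ⟪X, Y⟫ ≤ ⟪γ X, γ Y⟫

variable {𝒳 H S A : Type*} [NormedAddCommGroup 𝒳] [InnerProductSpace ℝ 𝒳]
    [NormedAddCommGroup H] [InnerProductSpace ℝ H] [Group S]

/-- The set `{Λ_a : a ∈ A}`, regarded as a subset of the space `L(𝒳, H)` of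
continuous linear maps with the operator norm. -/
def SDS.LambdaSet (𝔖 : SDS 𝒳 H S A) : Set (𝒳 →L[ℝ] H) :=
  {L | ∃ a : A, L = (𝔖.Λ a).toContinuousLinearMap}

/-- `A_X = {a ∈ A : X = Λ_a (γ X)}`. -/
def SDS.AX (𝔖 : SDS 𝒳 H S A) (X : H) : Set A := {a | X = 𝔖.Λ a (𝔖.γ X)}

/-- The Fréchet normal cone to `D` at `x`: empty if `x ∉ D`, and otherwise the set of
`y` with `limsup_{z → x, z ∈ D \ {x}} ⟨z - x, y⟩ / ‖z - x‖ ≤ 0`, expressed in ε-δ form. -/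
def fNormal {E : Type*} [NormedAddCommGroup E] [InnerProductSpace ℝ E]
    (D : Set E) (x : E) : Set E :=
  {y | x ∈ D ∧ ∀ ε : ℝ, 0 < ε → ∃ δ : ℝ, 0 < δ ∧
    ∀ z ∈ D, ‖z - x‖ < δ → ⟪z - x, y⟫ ≤ ε * ‖z - x‖}


lemma SDS.act_act (𝔖 : SDS 𝒳 H S A) (s t : S) (x : 𝒳) :
    𝔖.act s (𝔖.act t x) = 𝔖.act (s*t) x := by rw [map_mul]; rfl

lemma SDS.act_inv_cancel (𝔖 : SDS 𝒳 H S A) (s : S) (x : 𝒳) :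
    𝔖.act s (𝔖.act s⁻¹ x) = x := by
  rw [𝔖.act_act, mul_inv_cancel, map_one]; rfl

lemma SDS.inner_act (𝔖 : SDS 𝒳 H S A) (s : S) (u v : 𝒳) :
    ⟪𝔖.act s u, 𝔖.act s v⟫ = ⟪u, v⟫ := (𝔖.act s).inner_map_map u v

lemma SDS.inner_act_right (𝔖 : SDS 𝒳 H S A) (s : S) (u v : 𝒳) :
    ⟪u, 𝔖.act s v⟫ = ⟪𝔖.act s⁻¹ u, v⟫ := by
  conv_rhs => rw [← 𝔖.inner_act s, 𝔖.act_inv_cancel]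

lemma SDS.norm_act (𝔖 : SDS 𝒳 H S A) (s : S) (u : 𝒳) : ‖𝔖.act s u‖ = ‖u‖ :=
  (𝔖.act s).norm_map u

lemma SDS.norm_γ (𝔖 : SDS 𝒳 H S A) (X : H) : ‖𝔖.γ X‖ = ‖X‖ := by
  obtain ⟨a, ha⟩ := 𝔖.decomp X
  conv_rhs => rw [ha]
  rw [(𝔖.Λ a).norm_map]

lemma SDS.τ_γ (𝔖 : SDS 𝒳 H S A) (X : H) : 𝔖.τ (𝔖.γ X) = 𝔖.γ X := by
  obtain ⟨a, ha⟩ := 𝔖.decomp X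
  conv_rhs => rw [ha, 𝔖.γΛ]

lemma SDS.inner_τ (𝔖 : SDS 𝒳 H S A) (u v : 𝒳) : ⟪u, v⟫ ≤ ⟪𝔖.τ u, 𝔖.τ v⟫ := by
  obtain ⟨a, -⟩ := 𝔖.decomp (0 : H)
  calc ⟪u, v⟫ = ⟪𝔖.Λ a u, 𝔖.Λ a v⟫ := ((𝔖.Λ a).inner_map_map u v).symm
  _ ≤ ⟪𝔖.γ (𝔖.Λ a u), 𝔖.γ (𝔖.Λ a v)⟫ := 𝔖.inner_le _ _
  _ = ⟪𝔖.τ u, 𝔖.τ v⟫ := by rw [𝔖.γΛ, 𝔖.γΛ]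

lemma SDS.γ_lip (𝔖 : SDS 𝒳 H S A) (X Y : H) : ‖𝔖.γ X - 𝔖.γ Y‖ ≤ ‖X - Y‖ := by
  have h1 : ‖𝔖.γ X - 𝔖.γ Y‖^2 ≤ ‖X - Y‖^2 := by
    rw [norm_sub_sq_real, norm_sub_sq_real, 𝔖.norm_γ, 𝔖.norm_γ]
    linarith [𝔖.inner_le X Y]
  nlinarith [norm_nonneg (𝔖.γ X - 𝔖.γ Y), norm_nonneg (X - Y)]

lemma SDS.mem_sup (𝔖 : SDS 𝒳 H S A) (D : Set 𝒳)
    (hDinv : ∀ (s : S), ∀ x ∈ D, 𝔖.act s x ∈ D)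
    (X : H) (y : 𝒳) (hy : y ∈ fNormal D (𝔖.γ X)) (a : A) (ha : X = 𝔖.Λ a (𝔖.γ X)) :
    𝔖.Λ a y ∈ fNormal (𝔖.γ ⁻¹' D) X := by
  obtain ⟨hmem, hcond⟩ := hy
  refine ⟨hmem, fun ε hε => ?_⟩
  have hynn : (0:ℝ) ≤ ‖y‖ := norm_nonneg y
  have hMpos : (0:ℝ) < 1 + 4*‖y‖/ε := by positivity
  obtain ⟨δ, hδpos, hδ⟩ := hcond (ε/(2*(1 + 4*‖y‖/ε))) (by positivity)
  refine ⟨δ/(1 + 4*‖y‖/ε), by positivity, fun Z hZ hZX => ?_⟩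
  rcases eq_or_ne Z X with rfl | hne
  · simp
  have hh : 0 < ‖Z - X‖ := by rw [norm_pos_iff, sub_ne_zero]; exact hne
  set h := ‖Z - X‖ with hdefh
  set r : ℝ := ε/(2*h) with hr
  have hrpos : 0 < r := by positivity
  obtain ⟨s, hs⟩ := 𝔖.τ_orbit (y + r • 𝔖.γ X)
  have hZD : 𝔖.γ Z ∈ D := hZ
  have hwD : 𝔖.act s⁻¹ (𝔖.γ Z) ∈ D := hDinv s⁻¹ _ hZD
  -- (6): ‖act s γX - γX‖ ≤ 2‖y‖/r
  have key6 : ‖𝔖.act s (𝔖.γ X) - 𝔖.γ X‖ ≤ 2*‖y‖/r := by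
    have e1 : ⟪y + r • 𝔖.γ X, 𝔖.γ X⟫ ≤ ⟪𝔖.act s (y + r • 𝔖.γ X), 𝔖.γ X⟫ := by
      calc ⟪y + r • 𝔖.γ X, 𝔖.γ X⟫ ≤ ⟪𝔖.τ (y + r • 𝔖.γ X), 𝔖.τ (𝔖.γ X)⟫ := 𝔖.inner_τ _ _
      _ = ⟪𝔖.act s (y + r • 𝔖.γ X), 𝔖.γ X⟫ := by rw [hs, 𝔖.τ_γ]
    rw [map_add, map_smul, inner_add_left, inner_add_left, real_inner_smul_left,
      real_inner_smul_left, real_inner_self_eq_norm_sq] at e1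
    have e2 : ⟪𝔖.act s y, 𝔖.γ X⟫ = ⟪y, 𝔖.act s⁻¹ (𝔖.γ X)⟫ := by
      rw [real_inner_comm, 𝔖.inner_act_right, real_inner_comm]
    have e3 : ⟪y, 𝔖.act s⁻¹ (𝔖.γ X) - 𝔖.γ X⟫ ≤ ‖y‖ * ‖𝔖.act s⁻¹ (𝔖.γ X) - 𝔖.γ X‖ :=
      real_inner_le_norm _ _
    have e4 : ‖𝔖.act s⁻¹ (𝔖.γ X) - 𝔖.γ X‖ = ‖𝔖.act s (𝔖.γ X) - 𝔖.γ X‖ := by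
      calc ‖𝔖.act s⁻¹ (𝔖.γ X) - 𝔖.γ X‖
          = ‖𝔖.act s (𝔖.act s⁻¹ (𝔖.γ X) - 𝔖.γ X)‖ := (𝔖.norm_act s _).symm
      _ = ‖𝔖.γ X - 𝔖.act s (𝔖.γ X)‖ := by rw [map_sub, 𝔖.act_inv_cancel]
      _ = ‖𝔖.act s (𝔖.γ X) - 𝔖.γ X‖ := norm_sub_rev _ _
    have e5 : ‖𝔖.act s (𝔖.γ X) - 𝔖.γ X‖^2
        = 2*(‖𝔖.γ X‖^2 - ⟪𝔖.act s (𝔖.γ X), 𝔖.γ X⟫) := by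
      rw [norm_sub_sq_real, 𝔖.norm_act]; ring
    rw [inner_sub_right, e4] at e3
    have e6 : r * (‖𝔖.γ X‖^2 - ⟪𝔖.act s (𝔖.γ X), 𝔖.γ X⟫)
        ≤ ‖y‖ * ‖𝔖.act s (𝔖.γ X) - 𝔖.γ X‖ := by
      rw [e2] at e1; linarith
    rcases eq_or_lt_of_le (norm_nonneg (𝔖.act s (𝔖.γ X) - 𝔖.γ X)) with hc | hc
    · rw [← hc]; positivity
    · rw [le_div_iff₀ hrpos]
      nlinarith
  -- main chain
  have c1 : ⟪Z, 𝔖.Λ a y⟫ + r * ⟪Z, X⟫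
      ≤ ⟪𝔖.γ Z, 𝔖.act s y⟫ + r * ⟪𝔖.γ Z, 𝔖.act s (𝔖.γ X)⟫ := by
    have h0 := 𝔖.inner_le Z (𝔖.Λ a (y + r • 𝔖.γ X))
    rw [𝔖.γΛ, hs, map_add, map_smul, map_add, map_smul, inner_add_right, inner_add_right,
      real_inner_smul_right, real_inner_smul_right, ← ha] at h0
    exact h0
  have c2 : ⟪𝔖.γ Z, 𝔖.act s (𝔖.γ X)⟫ ≤ ⟪𝔖.γ Z, 𝔖.γ X⟫ := by
    rw [𝔖.inner_act_right]
    calc ⟪𝔖.act s⁻¹ (𝔖.γ Z), 𝔖.γ X⟫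
        ≤ ⟪𝔖.τ (𝔖.act s⁻¹ (𝔖.γ Z)), 𝔖.τ (𝔖.γ X)⟫ := 𝔖.inner_τ _ _
    _ = ⟪𝔖.γ Z, 𝔖.γ X⟫ := by rw [𝔖.τ_inv, 𝔖.τ_γ, 𝔖.τ_γ]
  have c3 : ⟪𝔖.γ Z, 𝔖.γ X⟫ - ⟪Z, X⟫ ≤ h^2/2 := by
    have eq1 := norm_sub_sq_real (𝔖.γ Z) (𝔖.γ X)
    have eq2 := norm_sub_sq_real Z X
    rw [𝔖.norm_γ, 𝔖.norm_γ] at eq1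
    have := sq_nonneg ‖𝔖.γ Z - 𝔖.γ X‖
    rw [← hdefh] at eq2
    linarith
  have c4 : ⟪𝔖.γ Z, 𝔖.act s y⟫ = ⟪𝔖.act s⁻¹ (𝔖.γ Z), y⟫ := 𝔖.inner_act_right s _ y
  have c5 : ‖𝔖.act s⁻¹ (𝔖.γ Z) - 𝔖.γ X‖ ≤ h + 2*‖y‖/r := by
    have t1 : ‖𝔖.act s⁻¹ (𝔖.γ Z) - 𝔖.γ X‖ = ‖𝔖.γ Z - 𝔖.act s (𝔖.γ X)‖ := by
      calc ‖𝔖.act s⁻¹ (𝔖.γ Z) - 𝔖.γ X‖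
          = ‖𝔖.act s (𝔖.act s⁻¹ (𝔖.γ Z) - 𝔖.γ X)‖ := (𝔖.norm_act s _).symm
      _ = ‖𝔖.γ Z - 𝔖.act s (𝔖.γ X)‖ := by rw [map_sub, 𝔖.act_inv_cancel]
    rw [t1]
    calc ‖𝔖.γ Z - 𝔖.act s (𝔖.γ X)‖
        ≤ ‖𝔖.γ Z - 𝔖.γ X‖ + ‖𝔖.γ X - 𝔖.act s (𝔖.γ X)‖ := norm_sub_le_norm_sub_add_norm_sub _ _ _
    _ ≤ h + 2*‖y‖/r := by
        rw [norm_sub_rev (𝔖.γ X)]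
        exact add_le_add (𝔖.γ_lip Z X) key6
  have hcomp : 2*‖y‖/r = 4*‖y‖*h/ε := by
    rw [hr]; field_simp; ring
  have c6 : ‖𝔖.act s⁻¹ (𝔖.γ Z) - 𝔖.γ X‖ < δ := by
    have : h + 2*‖y‖/r = h * (1 + 4*‖y‖/ε) := by rw [hcomp]; field_simp
    have hlt : h * (1 + 4*‖y‖/ε) < δ := (lt_div_iff₀ hMpos).mp hZX
    linarith [c5]
  have c7 := hδ _ hwD c6
  have c8 : ⟪𝔖.act s⁻¹ (𝔖.γ Z) - 𝔖.γ X, y⟫ ≤ ε * h / 2 := by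
    have hεM : 0 < ε/(2*(1 + 4*‖y‖/ε)) := by positivity
    have : ‖𝔖.act s⁻¹ (𝔖.γ Z) - 𝔖.γ X‖ ≤ h * (1 + 4*‖y‖/ε) := by
      have : h + 2*‖y‖/r = h * (1 + 4*‖y‖/ε) := by rw [hcomp]; field_simp
      linarith [c5]
    calc ⟪𝔖.act s⁻¹ (𝔖.γ Z) - 𝔖.γ X, y⟫
        ≤ (ε/(2*(1 + 4*‖y‖/ε))) * ‖𝔖.act s⁻¹ (𝔖.γ Z) - 𝔖.γ X‖ := c7
    _ ≤ (ε/(2*(1 + 4*‖y‖/ε))) * (h * (1 + 4*‖y‖/ε)) :=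
        mul_le_mul_of_nonneg_left this hεM.le
    _ = ε * h / 2 := by field_simp
  have g1 : ⟪Z - X, 𝔖.Λ a y⟫ = ⟪Z, 𝔖.Λ a y⟫ - ⟪𝔖.γ X, y⟫ := by
    rw [inner_sub_left]
    congr 1
    conv_lhs => rw [ha]
    exact (𝔖.Λ a).inner_map_map _ _
  have g2 : ⟪𝔖.act s⁻¹ (𝔖.γ Z) - 𝔖.γ X, y⟫ = ⟪𝔖.act s⁻¹ (𝔖.γ Z), y⟫ - ⟪𝔖.γ X, y⟫ :=
    inner_sub_left _ _ _
  have c2' := mul_le_mul_of_nonneg_left c2 hrpos.le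
  have c3' := mul_le_mul_of_nonneg_left c3 hrpos.le
  have hrh : r * (h^2/2) = ε * h / 4 := by rw [hr]; field_simp; ring
  have : ⟪Z - X, 𝔖.Λ a y⟫ ≤ ε * h / 2 + ε * h / 4 := by
    rw [g1]
    rw [c4] at c1
    linarith [c1, c2', c3', c8, g2]
  have hfin : ε * h / 2 + ε * h / 4 ≤ ε * h := by nlinarith
  linarith

set_option maxHeartbeats 2000000 in
lemma SDS.mem_sub [FiniteDimensional ℝ 𝒳] [FiniteDimensional ℝ H]
    (𝔖 : SDS 𝒳 H S A) (hcl : IsClosed 𝔖.LambdaSet)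
    (D : Set 𝒳) (hDinv : ∀ (s : S), ∀ x ∈ D, 𝔖.act s x ∈ D)
    (X Y : H) (hY : Y ∈ fNormal (𝔖.γ ⁻¹' D) X) :
    ∃ y ∈ fNormal D (𝔖.γ X), ∃ a : A, X = 𝔖.Λ a (𝔖.γ X) ∧ Y = 𝔖.Λ a y := by
  obtain ⟨hXmem, hcond⟩ := hY
  set t : ℕ → ℝ := fun k => 1/((k:ℝ)+1) with htdef
  have tpos : ∀ k, 0 < t k := fun k => by positivity
  have tlim : Tendsto t atTop (𝓝 0) := tendsto_one_div_add_atTop_nhds_zero_nat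
  have hb : ∀ k : ℕ, ∃ a : A, X + t k • Y = 𝔖.Λ a (𝔖.γ (X + t k • Y)) :=
    fun k => 𝔖.decomp _
  choose b hb using hb
  set W : ℕ → H := fun k => 𝔖.Λ (b k) (𝔖.γ X) with hWdef
  have F1 : ∀ k, ‖(X + t k • Y) - W k‖ ≤ t k * ‖Y‖ := by
    intro k
    have h3 : (X + t k • Y) - W k
        = 𝔖.Λ (b k) (𝔖.γ (X + t k • Y)) - 𝔖.Λ (b k) (𝔖.γ X) := by rw [← hb k]
    rw [h3, ← map_sub, (𝔖.Λ _).norm_map]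
    calc ‖𝔖.γ (X + t k • Y) - 𝔖.γ X‖ ≤ ‖(X + t k • Y) - X‖ := 𝔖.γ_lip _ _
    _ = t k * ‖Y‖ := by
        rw [add_sub_cancel_left, norm_smul, Real.norm_eq_abs, abs_of_pos (tpos k)]
  have F2 : ∀ k, W k ∈ 𝔖.γ ⁻¹' D := by
    intro k
    have : 𝔖.γ (W k) = 𝔖.γ X := by rw [hWdef]; simp only []; rw [𝔖.γΛ, 𝔖.τ_γ]
    simp only [mem_preimage, this]
    exact hXmem
  have F3 : ∀ k, ‖W k - X‖^2 ≤ 2 * t k * ⟪W k - X, Y⟫ := by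
    intro k
    have h2 : ‖(X + t k • Y) - W k‖^2 ≤ (t k * ‖Y‖)^2 := by
      nlinarith [norm_nonneg ((X + t k • Y) - W k), F1 k]
    have h3 : (X + t k • Y) - W k = (X - W k) + t k • Y := by abel
    rw [h3, norm_add_sq_real, real_inner_smul_right, norm_smul, Real.norm_eq_abs,
      abs_of_pos (tpos k)] at h2
    have h4 : ‖X - W k‖ = ‖W k - X‖ := norm_sub_rev _ _
    have h5 : ⟪X - W k, Y⟫ = -⟪W k - X, Y⟫ := by rw [← inner_neg_left, neg_sub]
    rw [h4, h5] at h2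
    nlinarith [h2]
  have F4 : ∀ k, ‖W k - X‖ ≤ 2 * t k * ‖Y‖ := by
    intro k
    rcases eq_or_lt_of_le (norm_nonneg (W k - X)) with hc | hc
    · rw [← hc]; positivity
    · nlinarith [F3 k, real_inner_le_norm (W k - X) Y, tpos k]
  have F5 : ∀ ε : ℝ, 0 < ε → ∃ N : ℕ, ∀ k ≥ N, ‖W k - X‖ ≤ ε * t k := by
    intro ε hε
    obtain ⟨δ, hδpos, hδ⟩ := hcond (ε/2) (by positivity)
    obtain ⟨N, hN⟩ := exists_nat_gt (2*‖Y‖/δ)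
    refine ⟨N, fun k hk => ?_⟩
    have hk1 : (0:ℝ) < (k:ℝ)+1 := by positivity
    have hNk : 2*‖Y‖/δ < (k:ℝ)+1 := by
      have : (N:ℝ) ≤ (k:ℝ) := by exact_mod_cast hk
      linarith
    have hδk : ‖W k - X‖ < δ := by
      have e1 : 2 * t k * ‖Y‖ = 2*‖Y‖/((k:ℝ)+1) := by
        rw [htdef]; field_simp
      have e2 : 2*‖Y‖/((k:ℝ)+1) < δ := by
        rw [div_lt_iff₀ hk1]
        have := (div_lt_iff₀ hδpos).mp hNk
        nlinarith
      calc ‖W k - X‖ ≤ 2 * t k * ‖Y‖ := F4 k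
      _ < δ := by rw [e1]; exact e2
    have hin := hδ (W k) (F2 k) hδk
    rcases eq_or_lt_of_le (norm_nonneg (W k - X)) with hc | hc
    · rw [← hc]; positivity
    · nlinarith [F3 k, tpos k]
  -- compactness of the Lambda set
  set T : ℕ → 𝒳 →L[ℝ] H := fun k => (𝔖.Λ (b k)).toContinuousLinearMap with hTdef
  have hTmem : ∀ k, T k ∈ 𝔖.LambdaSet := fun k => ⟨b k, rfl⟩
  have hbound : 𝔖.LambdaSet ⊆ closedBall 0 1 := by
    rintro L ⟨a, rfl⟩
    rw [mem_closedBall_zero_iff]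
    exact (𝔖.Λ a).norm_toContinuousLinearMap_le
  have hK : IsCompact 𝔖.LambdaSet :=
    Metric.isCompact_of_isClosed_isBounded hcl ((isBounded_closedBall).subset hbound)
  obtain ⟨L, hLmem, φ, hφ, hTφ⟩ := hK.tendsto_subseq hTmem
  obtain ⟨a, haL⟩ := hLmem
  set v : ℕ → 𝒳 := fun k => (t k)⁻¹ • (𝔖.γ (X + t k • Y) - 𝔖.γ X) with hvdef
  have hv : ∀ k, v k ∈ closedBall (0:𝒳) ‖Y‖ := by
    intro k
    rw [mem_closedBall_zero_iff, hvdef]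
    simp only []
    rw [norm_smul, Real.norm_eq_abs, abs_of_pos (inv_pos.mpr (tpos k))]
    have h1 : ‖𝔖.γ (X + t k • Y) - 𝔖.γ X‖ ≤ t k * ‖Y‖ := by
      calc ‖𝔖.γ (X + t k • Y) - 𝔖.γ X‖ ≤ ‖(X + t k • Y) - X‖ := 𝔖.γ_lip _ _
      _ = t k * ‖Y‖ := by
          rw [add_sub_cancel_left, norm_smul, Real.norm_eq_abs, abs_of_pos (tpos k)]
    calc (t k)⁻¹ * ‖𝔖.γ (X + t k • Y) - 𝔖.γ X‖ ≤ (t k)⁻¹ * (t k * ‖Y‖) :=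
          mul_le_mul_of_nonneg_left h1 (inv_pos.mpr (tpos k)).le
    _ = ‖Y‖ := by rw [← mul_assoc, inv_mul_cancel₀ (tpos k).ne', one_mul]
  obtain ⟨y, -, ψ, hψ, hvψ⟩ :=
    (isCompact_closedBall (0:𝒳) ‖Y‖).tendsto_subseq (fun k => hv (φ k))
  set σ : ℕ → ℕ := φ ∘ ψ with hσdef
  have hσ : StrictMono σ := hφ.comp hψ
  have hTσ : Tendsto (fun k => T (σ k)) atTop (𝓝 L) := hTφ.comp hψ.tendsto_atTop
  have hvσ : Tendsto (fun k => v (σ k)) atTop (𝓝 y) := hvψ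
  -- T k (v k) = Y + (t k)⁻¹ • (X - W k)
  have keyEval : ∀ k, T k (v k) = Y + (t k)⁻¹ • (X - W k) := by
    intro k
    have h1 : T k (𝔖.γ (X + t k • Y)) = X + t k • Y := (hb k).symm
    have h2 : T k (𝔖.γ X) = W k := rfl
    have htk : t k ≠ 0 := (tpos k).ne'
    calc T k (v k) = (t k)⁻¹ • (T k (𝔖.γ (X + t k • Y)) - T k (𝔖.γ X)) := by
          rw [hvdef]; simp only []; rw [map_smul, map_sub]
    _ = (t k)⁻¹ • (t k • Y + (X - W k)) := by rw [h1, h2]; congr 1; abel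
    _ = Y + (t k)⁻¹ • (X - W k) := by
          rw [smul_add, smul_smul, inv_mul_cancel₀ htk, one_smul]
  have hrem : Tendsto (fun k => (t k)⁻¹ • (X - W k)) atTop (𝓝 0) := by
    rw [tendsto_zero_iff_norm_tendsto_zero]
    rw [Metric.tendsto_atTop]
    intro ε hε
    obtain ⟨N, hN⟩ := F5 (ε/2) (by positivity)
    refine ⟨N, fun k hk => ?_⟩
    rw [Real.dist_eq, sub_zero, abs_of_nonneg (norm_nonneg _)]
    rw [norm_smul, Real.norm_eq_abs, abs_of_pos (inv_pos.mpr (tpos k)), norm_sub_rev]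
    have h1 := hN k hk
    have h2 : (t k)⁻¹ * ‖W k - X‖ ≤ (t k)⁻¹ * (ε/2 * t k) :=
      mul_le_mul_of_nonneg_left h1 (inv_pos.mpr (tpos k)).le
    have h3 : (t k)⁻¹ * (ε/2 * t k) = ε/2 := by
      rw [mul_comm, mul_assoc, mul_inv_cancel₀ (tpos k).ne', mul_one]
    linarith
  have hYlim : Tendsto (fun k => T (σ k) (v (σ k))) atTop (𝓝 Y) := by
    have h1 : Tendsto (fun k => Y + (t (σ k))⁻¹ • (X - W (σ k))) atTop (𝓝 (Y + 0)) :=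
      tendsto_const_nhds.add (hrem.comp hσ.tendsto_atTop)
    rw [add_zero] at h1
    simp only [keyEval]
    exact h1
  have hLy : Tendsto (fun k => T (σ k) (v (σ k))) atTop (𝓝 (L y)) :=
    (isBoundedBilinearMap_apply.continuous.tendsto (L, y)).comp (hTσ.prodMk_nhds hvσ)
  have hYeq : Y = L y := tendsto_nhds_unique hYlim hLy
  -- W (σ k) → X and W (σ k) = T (σ k) (γ X) → L (γ X)
  have hWlim : Tendsto (fun k => W (σ k)) atTop (𝓝 X) := by
    rw [tendsto_iff_norm_sub_tendsto_zero]
    have hg : Tendsto (fun k => 2 * t (σ k) * ‖Y‖) atTop (𝓝 0) := by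
      have := ((tlim.comp hσ.tendsto_atTop).const_mul 2).mul_const ‖Y‖
      simpa using this
    exact squeeze_zero (fun k => norm_nonneg _) (fun k => F4 (σ k)) hg
  have hWlim2 : Tendsto (fun k => W (σ k)) atTop (𝓝 (L (𝔖.γ X))) := by
    have h1 : Tendsto (fun k => T (σ k) (𝔖.γ X)) atTop (𝓝 (L (𝔖.γ X))) :=
      (isBoundedBilinearMap_apply.continuous.tendsto (L, 𝔖.γ X)).comp
        (hTσ.prodMk_nhds tendsto_const_nhds)
    exact h1
  have haX : X = 𝔖.Λ a (𝔖.γ X) := by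
    have h1 : L (𝔖.γ X) = X := tendsto_nhds_unique hWlim2 hWlim
    conv_lhs => rw [← h1]
    rw [haL]; rfl
  have hYa : Y = 𝔖.Λ a y := by rw [hYeq, haL]; rfl
  refine ⟨y, ⟨hXmem, fun ε hε => ?_⟩, a, haX, hYa⟩
  obtain ⟨δ, hδpos, hδ⟩ := hcond ε hε
  refine ⟨δ, hδpos, fun w hwD hwX => ?_⟩
  obtain ⟨s, hsw⟩ := 𝔖.τ_orbit w
  have hmem2 : 𝔖.Λ a w ∈ 𝔖.γ ⁻¹' D := by
    simp only [mem_preimage, 𝔖.γΛ, hsw]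
    exact hDinv s w hwD
  have hnorm : 𝔖.Λ a w - X = 𝔖.Λ a (w - 𝔖.γ X) := by rw [map_sub, ← haX]
  have h3 : ‖𝔖.Λ a w - X‖ < δ := by rw [hnorm, (𝔖.Λ a).norm_map]; exact hwX
  have h4 := hδ _ hmem2 h3
  rw [hnorm, (𝔖.Λ a).norm_map, hYa, (𝔖.Λ a).inner_map_map] at h4
  exact h4

/-- For a nonempty `S`-invariant `D ⊆ 𝒳` and `X ∈ H`:
`N_F(X; γ⁻¹(D)) = {Λ_a y : y ∈ N_F(γ(X); D), a ∈ A_X}`. -/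
theorem frechet_normal_spectral_set
    [FiniteDimensional ℝ 𝒳] [FiniteDimensional ℝ H]
    (𝔖 : SDS 𝒳 H S A) (hcl : IsClosed 𝔖.LambdaSet)
    (D : Set 𝒳) (hD : D.Nonempty) (hDinv : ∀ (s : S), ∀ x ∈ D, 𝔖.act s x ∈ D)
    (X : H) :
    fNormal (𝔖.γ ⁻¹' D) X = {Y | ∃ y ∈ fNormal D (𝔖.γ X), ∃ a ∈ 𝔖.AX X, Y = 𝔖.Λ a y} := by
  ext Y
  simp only [mem_setOf_eq]
  constructor
  · intro hY
    obtain ⟨y, hy, a, haX, hYa⟩ := 𝔖.mem_sub hcl D hDinv X Y hY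
    exact ⟨y, hy, a, haX, hYa⟩
  · rintro ⟨y, hy, a, haX, rfl⟩
    exact 𝔖.mem_sup D hDinv X y hy a haX
end
end

section
/- Suppose (𝒳, S, γ, (Λ_a)_{a∈A}) is a spectral decomposition system for a Euclidean space 𝔥 with {Λ_a : a ∈ A} closed in L(𝒳,𝔥). Let φ : 𝒳 → [−∞,+∞] be S-invariant and let X ∈ 𝔥. Then ∂_F(φ∘γ)(X) = {Λ_a y : y ∈ ∂_F φ(γ(X)), a ∈ A_X}. -/
open Filter Topology Set Metric
open scoped RealInnerProductSpace

noncomputable section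

variable {𝒳 H S A : Type*} [NormedAddCommGroup 𝒳] [InnerProductSpace ℝ 𝒳]
    [NormedAddCommGroup H] [InnerProductSpace ℝ H] [Group S]

/-- The Fréchet subdifferential of an extended-real-valued `f` at `x`: empty unless
`f x` is finite, in which case it is the set of `y` with
`liminf_{z → x, z ≠ x} (f(z) - f(x) - ⟨z - x, y⟩)/‖z - x‖ ≥ 0`, in ε-δ form. -/
def fSubdiff {E : Type*} [NormedAddCommGroup E] [InnerProductSpace ℝ E]
    (f : E → EReal) (x : E) : Set E :=
  {y | (∃ r : ℝ, f x = (r : EReal)) ∧ ∀ ε : ℝ, 0 < ε → ∃ δ : ℝ, 0 < δ ∧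
    ∀ z : E, ‖z - x‖ < δ → f x + ((⟪z - x, y⟫ - ε * ‖z - x‖ : ℝ) : EReal) ≤ f z}

set_option maxHeartbeats 1600000

namespace SDS

variable (𝔖 : SDS 𝒳 H S A)

lemma norm_gamma (X : H) : ‖𝔖.γ X‖ = ‖X‖ := by
  obtain ⟨a, ha⟩ := 𝔖.decomp X
  conv_rhs => rw [ha]
  rw [(𝔖.Λ a).norm_map]

lemma tau_gamma (X : H) : 𝔖.τ (𝔖.γ X) = 𝔖.γ X := by
  obtain ⟨a, ha⟩ := 𝔖.decomp X
  conv_rhs => rw [ha, 𝔖.γΛ]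

lemma gamma_lip (U V : H) : ‖𝔖.γ U - 𝔖.γ V‖ ≤ ‖U - V‖ := by
  have h1 := 𝔖.inner_le U V
  have h2 := norm_sub_sq_real (𝔖.γ U) (𝔖.γ V)
  have h3 := norm_sub_sq_real U V
  rw [𝔖.norm_gamma, 𝔖.norm_gamma] at h2
  nlinarith [norm_nonneg (𝔖.γ U - 𝔖.γ V), norm_nonneg (U - V)]

lemma inner_le_tau (u v : 𝒳) : ⟪u, v⟫ ≤ ⟪𝔖.τ u, 𝔖.τ v⟫ := by
  obtain ⟨a, -⟩ := 𝔖.decomp 0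
  calc ⟪u, v⟫ = ⟪𝔖.Λ a u, 𝔖.Λ a v⟫ := ((𝔖.Λ a).inner_map_map u v).symm
  _ ≤ ⟪𝔖.γ (𝔖.Λ a u), 𝔖.γ (𝔖.Λ a v)⟫ := 𝔖.inner_le _ _
  _ = ⟪𝔖.τ u, 𝔖.τ v⟫ := by rw [𝔖.γΛ, 𝔖.γΛ]

lemma phi_tau (φ : 𝒳 → EReal) (hφ : ∀ (s : S) (x : 𝒳), φ (𝔖.act s x) = φ x)
    (x : 𝒳) : φ (𝔖.τ x) = φ x := by
  obtain ⟨s, hs⟩ := 𝔖.τ_orbit x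
  rw [hs, hφ]

/-- The easy direction. -/
lemma easy_dir (φ : 𝒳 → EReal) (hφ : ∀ (s : S) (x : 𝒳), φ (𝔖.act s x) = φ x)
    (X : H) (y : 𝒳) (hy : y ∈ fSubdiff φ (𝔖.γ X)) (a : A) (ha : a ∈ 𝔖.AX X) :
    (𝔖.Λ a) y ∈ fSubdiff (fun Z => φ (𝔖.γ Z)) X := by
  obtain ⟨⟨r₀, hr₀⟩, hysub⟩ := hy
  have ha' : X = (𝔖.Λ a) (𝔖.γ X) := ha
  refine ⟨⟨r₀, hr₀⟩, ?_⟩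
  intro ε hε
  obtain ⟨B, hB⟩ : ∃ B : ℝ, B = ‖y‖ := ⟨_, rfl⟩
  have hB0 : 0 ≤ B := by rw [hB]; exact norm_nonneg y
  obtain ⟨C, hC⟩ : ∃ C : ℝ, C = 2 * (ε + 2*B) / ε := ⟨_, rfl⟩
  have hC0 : 0 < C := by rw [hC]; positivity
  obtain ⟨δ₀, hδ₀, hsub⟩ := hysub (ε/(2*C)) (by positivity)
  refine ⟨δ₀/C, by positivity, ?_⟩
  intro Z hZ
  by_cases hZX : Z = X
  · subst hZX
    simp only [sub_self, inner_zero_left, norm_zero, mul_zero, sub_zero, EReal.coe_zero,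
      add_zero, le_refl]
  · show φ (𝔖.γ X) + (((⟪Z - X, (𝔖.Λ a) y⟫ - ε * ‖Z - X‖ : ℝ)) : EReal) ≤ φ (𝔖.γ Z)
    set xb := 𝔖.γ X with hxb
    have htx : 𝔖.τ xb = xb := 𝔖.tau_gamma X
    obtain ⟨d, hd⟩ : ∃ d : ℝ, d = ‖Z - X‖ := ⟨_, rfl⟩
    have hd0 : 0 < d := by rw [hd]; exact norm_pos_iff.mpr (sub_ne_zero.mpr hZX)
    have hZd : d < δ₀ / C := by rw [hd]; exact hZ
    obtain ⟨t, ht⟩ : ∃ t : ℝ, t = d / ε := ⟨_, rfl⟩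
    have ht0 : 0 < t := by rw [ht]; exact div_pos hd0 hε
    obtain ⟨s, hs⟩ := 𝔖.τ_orbit (xb + t • y)
    set g := 𝔖.act s with hg
    set w := g.symm (𝔖.γ Z) with hw
    have hgw : g w = 𝔖.γ Z := g.apply_symm_apply _
    have hφw : φ w = φ (𝔖.γ Z) := by
      conv_rhs => rw [← hgw]
      exact (hφ s w).symm
    have hτw : 𝔖.τ w = 𝔖.γ Z := by
      have h1 : 𝔖.τ (g w) = 𝔖.τ w := 𝔖.τ_inv s w
      rw [hgw] at h1
      rw [← h1, 𝔖.tau_gamma]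
    have hnX : ‖xb‖ = ‖X‖ := 𝔖.norm_gamma X
    have hnw : ‖w‖ = ‖Z‖ := by
      rw [hw, g.symm.norm_map, 𝔖.norm_gamma]
    clear_value xb g w
    -- master inequality
    have master : ⟪Z, X⟫ + t*⟪Z, (𝔖.Λ a) y⟫ ≤ ⟪w, xb⟫ + t*⟪w, y⟫ := by
      have h2 : X + t•((𝔖.Λ a) y) = (𝔖.Λ a) (xb + t•y) := by
        rw [map_add, map_smul, ← ha']
      have h1 : ⟪Z, X + t•((𝔖.Λ a) y)⟫ ≤ ⟪w, xb + t•y⟫ := by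
        calc ⟪Z, X + t•((𝔖.Λ a) y)⟫ ≤ ⟪𝔖.γ Z, 𝔖.γ (X + t•((𝔖.Λ a) y))⟫ := 𝔖.inner_le _ _
        _ = ⟪𝔖.γ Z, g (xb + t•y)⟫ := by rw [h2, 𝔖.γΛ, hs]
        _ = ⟪g w, g (xb + t•y)⟫ := by rw [hgw]
        _ = ⟪w, xb + t•y⟫ := g.inner_map_map _ _
      rw [inner_add_right, inner_add_right, real_inner_smul_right,
        real_inner_smul_right] at h1
      exact h1
    obtain ⟨r, hr⟩ : ∃ r : ℝ, r = ‖w - xb‖ := ⟨_, rfl⟩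
    have hr0 : 0 ≤ r := by rw [hr]; exact norm_nonneg _
    have hr2 : r^2 = d^2 + 2*⟪Z,X⟫ - 2*⟪w,xb⟫ := by
      have e1 := norm_sub_sq_real w xb
      have e2 := norm_sub_sq_real Z X
      rw [hnw, hnX] at e1
      rw [← hr] at e1
      rw [← hd] at e2
      linarith
    have hup : ⟪w, xb⟫ - ⟪Z,X⟫ ≤ d^2/2 := by
      have h4 : ⟪w, xb⟫ ≤ ⟪𝔖.γ Z, xb⟫ := by
        have h5 := 𝔖.inner_le_tau w xb
        rw [hτw] at h5
        rw [htx] at h5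
        exact h5
      have h5 := norm_sub_sq_real (𝔖.γ Z) xb
      have h6 := norm_sub_sq_real Z X
      rw [𝔖.norm_gamma Z, hnX] at h5
      rw [← hd] at h6
      nlinarith [sq_nonneg ‖𝔖.γ Z - xb‖]
    have hXy : ⟪X, (𝔖.Λ a) y⟫ = ⟪xb, y⟫ := by
      conv_lhs => rw [ha']
      exact (𝔖.Λ a).inner_map_map _ y
    have hny : ‖(𝔖.Λ a) y‖ = B := by rw [hB]; exact (𝔖.Λ a).norm_map y
    have hZXy : |⟪Z, (𝔖.Λ a) y⟫ - ⟪X, (𝔖.Λ a) y⟫| ≤ d * B := by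
      have h7 := abs_real_inner_le_norm (Z - X) ((𝔖.Λ a) y)
      rw [hny, ← hd, inner_sub_left] at h7; exact h7
    have hwxy : |⟪w, y⟫ - ⟪xb, y⟫| ≤ r * B := by
      have h7 := abs_real_inner_le_norm (w - xb) y
      rw [← hB, ← hr, inner_sub_left] at h7; exact h7
    -- lower bound via master and the bound r ≤ C * d
    have hlow : ⟪w,xb⟫ - ⟪Z,X⟫ ≥ t*⟪Z,(𝔖.Λ a) y⟫ - t*⟪w,y⟫ := by linarith
    have hrC : r ≤ C * d := by
      have hkey : ε*r^2 ≤ ε*d^2 + 2*d*(d+r)*B := by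
        have habs1 : ⟪Z,(𝔖.Λ a) y⟫ - ⟪X, (𝔖.Λ a) y⟫ ≥ -(d*B) :=
          neg_le_of_abs_le hZXy
        have habs2 : ⟪w,y⟫ - ⟪xb,y⟫ ≤ r*B := le_of_abs_le hwxy
        have htε : t * ε = d := by rw [ht]; field_simp
        have hΔ : ⟪w,xb⟫ - ⟪Z,X⟫ ≥ -(t*(d*B + r*B)) := by nlinarith
        nlinarith
      rw [hC, div_mul_eq_mul_div, le_div_iff₀ hε]
      nlinarith [sq_nonneg (ε*r - (ε+2*B)*d), mul_pos hd0 hε, sq_nonneg (r-d)]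
    have hrδ : r < δ₀ := by
      calc r ≤ C * d := hrC
      _ < C * (δ₀ / C) := mul_lt_mul_of_pos_left hZd hC0
      _ = δ₀ := by field_simp
    have key := hsub w (by rw [← hr]; exact hrδ)
    rw [← hr] at key
    -- final real inequality
    have hfin : (⟪Z,(𝔖.Λ a) y⟫ - ⟪X,(𝔖.Λ a) y⟫) - ε * d ≤ (⟪w,y⟫ - ⟪xb,y⟫) - (ε/(2*C)) * r := by
      have ha1 : t * (⟪w,y⟫ - ⟪xb,y⟫) ≥ t * ((⟪Z,(𝔖.Λ a) y⟫ - ⟪X,(𝔖.Λ a) y⟫) - ε*d/2) := by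
        have htε : t * (ε*d/2) = d^2/2 := by rw [ht]; field_simp
        nlinarith
      have ha2 : ⟪w,y⟫ - ⟪xb,y⟫ ≥ (⟪Z,(𝔖.Λ a) y⟫ - ⟪X,(𝔖.Λ a) y⟫) - ε*d/2 :=
        (mul_le_mul_iff_right₀ ht0).mp ha1
      have ha3 : (ε/(2*C)) * r ≤ ε*d/2 := by
        rw [div_mul_eq_mul_div, div_le_iff₀ (by positivity : (0:ℝ) < 2*C)]
        calc ε * r ≤ ε * (C*d) := by nlinarith
        _ = ε * d / 2 * (2*C) := by ring
      linarith
    rw [inner_sub_left, ← hd, hr₀, ← EReal.coe_add, ← hφw]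
    rw [hr₀, ← EReal.coe_add] at key
    refine le_trans ?_ key
    rw [EReal.coe_le_coe_iff]
    have hin : ⟪w - xb, y⟫ = ⟪w,y⟫ - ⟪xb,y⟫ := inner_sub_left w xb y
    linarith

lemma sq_div_aux {u c : ℝ} (hu : 0 ≤ u) (hc : 0 ≤ c) (h : u^2 ≤ c*u) : u ≤ c := by
  rcases eq_or_lt_of_le hu with h0 | h0
  · linarith
  · nlinarith

/-- The hard direction. -/
lemma hard_dir [FiniteDimensional ℝ 𝒳] [FiniteDimensional ℝ H]
    (hcl : IsClosed 𝔖.LambdaSet)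
    (φ : 𝒳 → EReal) (hφ : ∀ (s : S) (x : 𝒳), φ (𝔖.act s x) = φ x)
    (X : H) (Y : H) (hY : Y ∈ fSubdiff (fun Z => φ (𝔖.γ Z)) X) :
    ∃ y ∈ fSubdiff φ (𝔖.γ X), ∃ a ∈ 𝔖.AX X, Y = 𝔖.Λ a y := by
  obtain ⟨⟨r₀, hr₀⟩, hsub⟩ := hY
  have hr₀' : φ (𝔖.γ X) = (r₀ : EReal) := hr₀
  -- Step A: approximate simultaneous decompositions
  have main : ∀ n : ℕ, ∃ L ∈ 𝔖.LambdaSet, ∃ v : 𝒳, ‖v‖ ≤ ‖Y‖ ∧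
      ‖L (𝔖.γ X) - X‖ ≤ 2/((n:ℝ)+1) ∧ ‖Y - L v‖ ≤ 2/((n:ℝ)+1) := by
    intro n
    obtain ⟨ε, hεdef⟩ : ∃ ε : ℝ, ε = 1/((n:ℝ)+1) := ⟨_, rfl⟩
    have hε : 0 < ε := by rw [hεdef]; positivity
    have hε1 : ε ≤ 1 := by
      rw [hεdef, div_le_one (by positivity)]
      simp
    obtain ⟨δ, hδ, hsubδ⟩ := hsub ε hε
    obtain ⟨t, htdef⟩ : ∃ t : ℝ, t = min ε (δ/(2*‖Y‖+1)) := ⟨_, rfl⟩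
    have ht0 : 0 < t := by
      rw [htdef]; apply lt_min hε; positivity
    have htε : t ≤ ε := by rw [htdef]; exact min_le_left _ _
    have htδ : t ≤ δ/(2*‖Y‖+1) := by rw [htdef]; exact min_le_right _ _
    obtain ⟨b, hb⟩ := 𝔖.decomp (X + t • Y)
    have hnZ : ‖(𝔖.Λ b) (𝔖.γ X)‖ = ‖X‖ := by
      rw [(𝔖.Λ b).norm_map, 𝔖.norm_gamma]
    have hZ2 : ‖(𝔖.Λ b) (𝔖.γ X) - X‖^2 ≤ 2*t*⟪(𝔖.Λ b) (𝔖.γ X) - X, Y⟫ := by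
      have h1 : ⟪X, X + t•Y⟫ ≤ ⟪(𝔖.Λ b) (𝔖.γ X), X + t•Y⟫ := by
        calc ⟪X, X + t•Y⟫ ≤ ⟪𝔖.γ X, 𝔖.γ (X + t•Y)⟫ := 𝔖.inner_le _ _
        _ = ⟪(𝔖.Λ b) (𝔖.γ X), (𝔖.Λ b) (𝔖.γ (X + t•Y))⟫ :=
            ((𝔖.Λ b).inner_map_map _ _).symm
        _ = ⟪(𝔖.Λ b) (𝔖.γ X), X + t•Y⟫ := by rw [← hb]
      rw [inner_add_right, inner_add_right, real_inner_smul_right,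
        real_inner_smul_right] at h1
      have h2 := norm_sub_sq_real ((𝔖.Λ b) (𝔖.γ X)) X
      rw [hnZ] at h2
      rw [inner_sub_left]
      have h3 : ⟪X,X⟫ = ‖X‖^2 := real_inner_self_eq_norm_sq X
      nlinarith
    have hZY : ‖(𝔖.Λ b) (𝔖.γ X) - X‖ ≤ 2*t*‖Y‖ := by
      apply sq_div_aux (norm_nonneg _) (by positivity)
      have := real_inner_le_norm ((𝔖.Λ b) (𝔖.γ X) - X) Y
      nlinarith
    have hZδ : ‖(𝔖.Λ b) (𝔖.γ X) - X‖ < δ := by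
      have h5 : 2*(δ/(2*‖Y‖+1))*‖Y‖ < δ := by
        have he : 2*(δ/(2*‖Y‖+1))*‖Y‖ = (2*δ*‖Y‖)/(2*‖Y‖+1) := by ring
        rw [he, div_lt_iff₀ (by positivity)]
        nlinarith [norm_nonneg Y, hδ]
      have h6 : 2*t*‖Y‖ ≤ 2*(δ/(2*‖Y‖+1))*‖Y‖ := by
        apply mul_le_mul_of_nonneg_right _ (norm_nonneg Y)
        linarith
      linarith
    have hγZ : 𝔖.γ ((𝔖.Λ b) (𝔖.γ X)) = 𝔖.γ X := by
      rw [𝔖.γΛ, 𝔖.tau_gamma]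
    have h7 := hsubδ ((𝔖.Λ b) (𝔖.γ X)) hZδ
    simp only [] at h7
    rw [hγZ, hr₀', ← EReal.coe_add, EReal.coe_le_coe_iff] at h7
    have hiY : ⟪(𝔖.Λ b) (𝔖.γ X) - X, Y⟫ ≤ ε * ‖(𝔖.Λ b) (𝔖.γ X) - X‖ := by linarith
    have hZε : ‖(𝔖.Λ b) (𝔖.γ X) - X‖ ≤ 2*ε*t := by
      apply sq_div_aux (norm_nonneg _) (by positivity)
      nlinarith
    refine ⟨(𝔖.Λ b).toContinuousLinearMap, ⟨b, rfl⟩,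
      t⁻¹ • (𝔖.γ (X + t•Y) - 𝔖.γ X), ?_, ?_, ?_⟩
    · rw [norm_smul, Real.norm_eq_abs, abs_of_pos (inv_pos.mpr ht0)]
      have hlip : ‖𝔖.γ (X + t•Y) - 𝔖.γ X‖ ≤ t * ‖Y‖ := by
        have := 𝔖.gamma_lip (X + t•Y) X
        rw [add_sub_cancel_left, norm_smul, Real.norm_eq_abs, abs_of_pos ht0] at this
        exact this
      calc t⁻¹ * ‖𝔖.γ (X + t•Y) - 𝔖.γ X‖ ≤ t⁻¹ * (t * ‖Y‖) := by
            apply mul_le_mul_of_nonneg_left hlip (le_of_lt (inv_pos.mpr ht0))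
      _ = ‖Y‖ := by field_simp
    · calc ‖(𝔖.Λ b).toContinuousLinearMap (𝔖.γ X) - X‖ ≤ 2*ε*t := hZε
      _ ≤ 2 * ε := by nlinarith
      _ = 2/((n:ℝ)+1) := by rw [hεdef]; try ring
    · have hveq : Y - (𝔖.Λ b) (t⁻¹ • (𝔖.γ (X + t•Y) - 𝔖.γ X))
          = t⁻¹ • (((𝔖.Λ b) (𝔖.γ X)) - X) := by
        rw [map_smul, map_sub, ← hb]
        match_scalars <;> field_simp <;> ring
      show ‖Y - (𝔖.Λ b) (t⁻¹ • (𝔖.γ (X + t•Y) - 𝔖.γ X))‖ ≤ 2/((n:ℝ)+1)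
      rw [hveq, norm_smul, Real.norm_eq_abs, abs_of_pos (inv_pos.mpr ht0)]
      calc t⁻¹ * ‖(𝔖.Λ b) (𝔖.γ X) - X‖ ≤ t⁻¹ * (2*ε*t) := by
            apply mul_le_mul_of_nonneg_left hZε (le_of_lt (inv_pos.mpr ht0))
      _ = 2 * ε := by field_simp; try ring
      _ = 2/((n:ℝ)+1) := by rw [hεdef]; try ring
  -- Step B: compactness
  choose L hL v hv1 hv2 hv3 using main
  have hLb : ∀ n, L n ∈ closedBall (0 : 𝒳 →L[ℝ] H) 1 := by
    intro n
    obtain ⟨a, haa⟩ := hL n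
    rw [mem_closedBall_zero_iff, haa]
    exact (𝔖.Λ a).norm_toContinuousLinearMap_le
  have hvb : ∀ n, v n ∈ closedBall (0 : 𝒳) ‖Y‖ := by
    intro n
    rw [mem_closedBall_zero_iff]
    exact hv1 n
  obtain ⟨l, hlK, ψ, hψ, hLc⟩ :=
    (isCompact_closedBall (0 : 𝒳 →L[ℝ] H) 1).tendsto_subseq hLb
  obtain ⟨w, hwK, ψ', hψ', hvc⟩ :=
    (isCompact_closedBall (0 : 𝒳) ‖Y‖).tendsto_subseq
      (x := fun n => v (ψ n)) (fun n => hvb _)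
  have hθ : StrictMono (ψ ∘ ψ') := hψ.comp hψ'
  have hL1 : Tendsto (fun n => L (ψ (ψ' n))) atTop (𝓝 l) :=
    hLc.comp hψ'.tendsto_atTop
  have hv4 : Tendsto (fun n => v (ψ (ψ' n))) atTop (𝓝 w) := hvc
  have hp1 : l ∈ 𝔖.LambdaSet :=
    hcl.mem_of_tendsto hL1 (Eventually.of_forall (fun n => hL (ψ (ψ' n))))
  obtain ⟨a, hLa⟩ := hp1
  have hton : Tendsto (fun n : ℕ => 2/((n:ℝ)+1)) atTop (𝓝 0) := by
    have h2 := tendsto_one_div_add_atTop_nhds_zero_nat.const_mul (2:ℝ)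
    simpa [one_div, div_eq_mul_inv, mul_comm] using h2
  have hbnd : ∀ n : ℕ, 2/((ψ (ψ' n):ℝ)+1) ≤ 2/((n:ℝ)+1) := by
    intro n
    apply div_le_div_of_nonneg_left (by norm_num) (by positivity)
    have h9 : (n:ℝ) ≤ (ψ (ψ' n) : ℝ) := Nat.cast_le.mpr (hθ.le_apply (x := n))
    linarith
  -- evaluation at γ X
  have happ1 : Tendsto (fun n => (L (ψ (ψ' n))) (𝔖.γ X)) atTop (𝓝 (l (𝔖.γ X))) :=
    ((ContinuousLinearMap.apply ℝ H (𝔖.γ X)).continuous.tendsto l).comp hL1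
  have happ2 : Tendsto (fun n => (L (ψ (ψ' n))) (𝔖.γ X)) atTop (𝓝 X) := by
    rw [← tendsto_sub_nhds_zero_iff]
    refine squeeze_zero_norm (fun n => ?_) hton
    exact le_trans (hv2 (ψ (ψ' n))) (hbnd n)
  have hEQ1 : l (𝔖.γ X) = X := tendsto_nhds_unique happ1 happ2
  -- evaluation at v
  have happ3 : Tendsto (fun n => (L (ψ (ψ' n))) (v (ψ (ψ' n)))) atTop (𝓝 (l w)) := by
    have hcont : Continuous (fun q : (𝒳 →L[ℝ] H) × 𝒳 => q.1 q.2) :=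
      isBoundedBilinearMap_apply.continuous
    exact (hcont.tendsto (l, w)).comp (hL1.prodMk_nhds hv4)
  have happ4 : Tendsto (fun n => (L (ψ (ψ' n))) (v (ψ (ψ' n)))) atTop (𝓝 Y) := by
    rw [← tendsto_sub_nhds_zero_iff]
    refine squeeze_zero_norm (fun n => ?_) hton
    rw [← norm_neg, neg_sub]
    exact le_trans (hv3 (ψ (ψ' n))) (hbnd n)
  have hEQ2 : l w = Y := tendsto_nhds_unique happ3 happ4
  have haX : a ∈ 𝔖.AX X := by
    show X = (𝔖.Λ a) (𝔖.γ X)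
    conv_lhs => rw [← hEQ1, hLa]
    rfl
  have hYeq : Y = (𝔖.Λ a) w := by
    conv_lhs => rw [← hEQ2, hLa]
    rfl
  -- Step C: w is a subgradient of φ at γ X
  refine ⟨w, ⟨⟨r₀, hr₀'⟩, ?_⟩, a, haX, hYeq⟩
  intro ε hε
  obtain ⟨δ, hδ, hsubδ⟩ := hsub ε hε
  refine ⟨δ, hδ, ?_⟩
  intro z hz
  have hXa : X = (𝔖.Λ a) (𝔖.γ X) := haX
  have h1 : ‖(𝔖.Λ a) z - X‖ < δ := by
    rw [hXa, ← map_sub, (𝔖.Λ a).norm_map]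
    exact hz
  have h2 := hsubδ ((𝔖.Λ a) z) h1
  simp only [] at h2
  rw [𝔖.γΛ, 𝔖.phi_tau φ hφ] at h2
  have h3 : ⟪(𝔖.Λ a) z - X, Y⟫ = ⟪z - 𝔖.γ X, w⟫ := by
    conv_lhs => rw [hXa, hYeq, ← map_sub, (𝔖.Λ a).inner_map_map]
  have h4 : ‖(𝔖.Λ a) z - X‖ = ‖z - 𝔖.γ X‖ := by
    conv_lhs => rw [hXa]
    rw [← map_sub, (𝔖.Λ a).norm_map]
  rw [h3, h4] at h2
  exact h2

end SDS

/-- For an `S`-invariant `φ : 𝒳 → [-∞, +∞]` and `X ∈ H`: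
`∂_F(φ ∘ γ)(X) = {Λ_a y : y ∈ ∂_F φ(γ(X)), a ∈ A_X}`. -/
theorem frechet_subdiff_spectral
    [FiniteDimensional ℝ 𝒳] [FiniteDimensional ℝ H]
    (𝔖 : SDS 𝒳 H S A) (hcl : IsClosed 𝔖.LambdaSet)
    (φ : 𝒳 → EReal) (hφ : ∀ (s : S) (x : 𝒳), φ (𝔖.act s x) = φ x)
    (X : H) :
    fSubdiff (fun Z => φ (𝔖.γ Z)) X
      = {Y | ∃ y ∈ fSubdiff φ (𝔖.γ X), ∃ a ∈ 𝔖.AX X, Y = 𝔖.Λ a y} := by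
  ext Y
  constructor
  · intro hY
    exact 𝔖.hard_dir hcl φ hφ X Y hY
  · rintro ⟨y, hy, a, ha, rfl⟩
    exact 𝔖.easy_dir φ hφ X y hy a ha
end
end
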